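/- For every positive integer t, ∑_{n=0}^{t} √(n(t-n)) ≤ (π/8)·t² - (t-2)/(6t). -/

import Mathlib

open intervalIntegral Real Finset

private lemma key0' (t n s a b : ℝ) (hs0 : 0 ≤ s) (hs1 : s ≤ 1)
    (ha : a^2 = n*(t-n)) (hb : b^2 = (n+1)*(t-(n+1))) :
    ((1-s)*a + s*b)^2 ≤ (1-s)*(n*(t-n)) + s*((n+1)*(t-(n+1))) + s*(1-s) := by
  nlinarith [sq_nonneg (a-b), mul_nonneg hs0 (by linarith : (0:ℝ) ≤ 1-s), sq_nonneg ((1-s)*a - s*b)]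

private lemma key1' (t n s a b : ℝ) (ht : 3 ≤ t) (hn1 : 1 ≤ n) (hn2 : n ≤ t - 2)
    (hs0 : 0 ≤ s) (hs1 : s ≤ 1) (ha0 : 0 ≤ a) (hb0 : 0 ≤ b)
    (ha : a^2 = n*(t-n)) (hb : b^2 = (n+1)*(t-(n+1))) :
    ((1-s)*a + s*b + s*(1-s)/t)^2 ≤ (1-s)*(n*(t-n)) + s*((n+1)*(t-(n+1))) + s*(1-s) := by
  have ht0 : (0:ℝ) < t := by linarith
  have h1s : (0:ℝ) ≤ 1 - s := by linarith
  have hat : 2*a ≤ t := by nlinarith [sq_nonneg (t - 2*n)]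
  have hbt : 2*b ≤ t := by nlinarith [sq_nonneg (t - 2*(n+1))]
  have k1 : 0 ≤ 2*t*(t-2*a) - (t-2*n)^2 := by nlinarith
  have k2 : 0 ≤ 2*t*(t-2*b) - (t-2*(n+1))^2 := by nlinarith
  have k3 : t^2*(a-b)^2 ≥ (t-2*n-1)^2 := by
    have h : ((a-b)*(a+b))^2 = (t-2*n-1)^2 := by
      have h2 : (a-b)*(a+b) = a^2 - b^2 := by ring
      rw [h2, ha, hb]; ring_nf
    nlinarith [sq_nonneg (a+b), sq_nonneg (a-b)]
  have hB : 0 ≤ 2*t^2*(a-b)^2 + 2*t^2 - 2*s*(1-s) - 4*t*((1-s)*a + s*b) := by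
    nlinarith [mul_nonneg h1s k1, mul_nonneg hs0 k2,
      sq_nonneg (3*(t-2*n) - 2 - 2*s), sq_nonneg (1-s), sq_nonneg s]
  rw [← ha, ← hb]
  have key : ((1-s)*a^2 + s*b^2 + s*(1-s)) - ((1-s)*a + s*b + s*(1-s)/t)^2
      = s*(1-s)/(2*t^2) * (2*t^2*(a-b)^2 + 2*t^2 - 2*s*(1-s) - 4*t*((1-s)*a + s*b)) := by
    field_simp
    ring
  linarith [mul_nonneg (div_nonneg (mul_nonneg hs0 h1s) (by positivity : (0:ℝ) ≤ 2*t^2)) hB]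

private lemma ptwise' (t n x c : ℝ) (hn0 : 0 ≤ n) (hnt : n + 1 ≤ t)
    (hx1 : n ≤ x) (hx2 : x ≤ n + 1)
    (hc : c = 0 ∨ (c = 1/t ∧ 3 ≤ t ∧ 1 ≤ n ∧ n ≤ t - 2)) :
    (n+1-x) * Real.sqrt (n*(t-n)) + (x-n) * Real.sqrt ((n+1)*(t-(n+1)))
      + c * ((x-n)*(n+1-x)) ≤ Real.sqrt (x*(t-x)) := by
  set s : ℝ := x - n with hs
  have hs0 : 0 ≤ s := by simp [hs]; linarith
  have hs1 : s ≤ 1 := by simp [hs]; linarith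
  set a := Real.sqrt (n*(t-n)) with hadef
  set b := Real.sqrt ((n+1)*(t-(n+1))) with hbdef
  have hA : 0 ≤ n*(t-n) := mul_nonneg hn0 (by linarith)
  have hBn : 0 ≤ (n+1)*(t-(n+1)) := mul_nonneg (by linarith) (by linarith)
  have ha : a^2 = n*(t-n) := Real.sq_sqrt hA
  have hb : b^2 = (n+1)*(t-(n+1)) := Real.sq_sqrt hBn
  have ha0 : 0 ≤ a := Real.sqrt_nonneg _
  have hb0 : 0 ≤ b := Real.sqrt_nonneg _
  have hxid : x*(t-x) = (1-s)*(n*(t-n)) + s*((n+1)*(t-(n+1))) + s*(1-s) := by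
    simp only [hs]; ring
  have hgoal : ((1-s)*a + s*b + c*(s*(1-s)))^2 ≤ x*(t-x) := by
    rw [hxid]
    rcases hc with h0 | ⟨hct, ht3, hn1, hn2⟩
    · rw [h0]; simpa using key0' t n s a b hs0 hs1 ha hb
    · rw [hct]
      calc ((1-s)*a + s*b + 1/t*(s*(1-s)))^2 = ((1-s)*a + s*b + s*(1-s)/t)^2 := by ring
        _ ≤ _ := key1' t n s a b ht3 hn1 hn2 hs0 hs1 ha0 hb0 ha hb
  have hLHS0 : 0 ≤ (1-s)*a + s*b + c*(s*(1-s)) := by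
    have hc0 : 0 ≤ c := by
      rcases hc with h | ⟨h, ht3, _, _⟩
      · simp [h]
      · rw [h]; positivity
    have : 0 ≤ 1 - s := by linarith
    positivity
  have hx0 : 0 ≤ x*(t-x) := mul_nonneg (by linarith) (by linarith)
  have := Real.le_sqrt hLHS0 hx0
  calc (n+1-x) * a + (x-n) * b + c * ((x-n)*(n+1-x))
      = (1-s)*a + s*b + c*(s*(1-s)) := by simp only [hs]; ring
    _ ≤ Real.sqrt (x*(t-x)) := this.2 hgoal

private lemma lineint' (n a b c : ℝ) :
    ∫ x in n..(n+1), ((n+1-x) * a + (x-n) * b + c * ((x-n)*(n+1-x)))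
      = (a+b)/2 + c/6 := by
  have h : ∀ x ∈ Set.uIcc n (n+1), HasDerivAt
      (fun x : ℝ => a*((n+1)*x - x^2/2) + b*(x^2/2 - n*x)
        + c*(-(x^3)/3 + (2*n+1)*x^2/2 - n*(n+1)*x))
      ((n+1-x) * a + (x-n) * b + c * ((x-n)*(n+1-x))) x := by
    intro x _
    have h1 : HasDerivAt (fun x : ℝ => x) 1 x := hasDerivAt_id x
    have h2 : HasDerivAt (fun x : ℝ => x^2) (2*x) x := by simpa using hasDerivAt_pow 2 x
    have h3 : HasDerivAt (fun x : ℝ => x^3) (3*x^2) x := by simpa using hasDerivAt_pow 3 x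
    have := (((h1.const_mul (n+1)).sub (h2.div_const 2)).const_mul a).add
      (((h2.div_const 2).sub (h1.const_mul n)).const_mul b) |>.add
      ((((h3.div_const 3).neg.add ((h2.div_const 2).const_mul (2*n+1))).sub
        (h1.const_mul (n*(n+1)))).const_mul c)
    convert this using 1
    · rfl
    · rfl
    · ext y; simp only [Pi.add_apply, Pi.sub_apply, Pi.neg_apply]; ring
    · ring
  rw [integral_eq_sub_of_hasDerivAt h
    (Continuous.intervalIntegrable (by continuity) _ _)]
  ring

private lemma trap' (t n c : ℝ) (hn0 : 0 ≤ n) (hnt : n + 1 ≤ t)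
    (hc : c = 0 ∨ (c = 1/t ∧ 3 ≤ t ∧ 1 ≤ n ∧ n ≤ t - 2)) :
    (Real.sqrt (n*(t-n)) + Real.sqrt ((n+1)*(t-(n+1))))/2 + c/6
      ≤ ∫ x in n..(n+1), Real.sqrt (x*(t-x)) := by
  have hcont : Continuous (fun x : ℝ => Real.sqrt (x*(t-x))) := by
    apply Real.continuous_sqrt.comp; continuity
  have hint1 : IntervalIntegrable
      (fun x => (n+1-x) * Real.sqrt (n*(t-n)) + (x-n) * Real.sqrt ((n+1)*(t-(n+1)))
        + c * ((x-n)*(n+1-x))) MeasureTheory.volume n (n+1) :=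
    Continuous.intervalIntegrable (by continuity) _ _
  have hint2 : IntervalIntegrable (fun x : ℝ => Real.sqrt (x*(t-x)))
      MeasureTheory.volume n (n+1) := hcont.intervalIntegrable _ _
  have hmono := intervalIntegral.integral_mono_on (by linarith : n ≤ n+1)
    hint1 hint2 (fun x hx => ptwise' t n x c hn0 hnt hx.1 hx.2 hc)
  rw [lineint'] at hmono
  exact hmono

private lemma intA' (t : ℝ) (ht : 0 < t) :
    ∫ x in (0:ℝ)..t, Real.sqrt (x*(t-x)) = Real.pi/8 * t^2 := by
  have hcongr : ∫ x in (0:ℝ)..t, Real.sqrt (x*(t-x))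
      = ∫ x in (0:ℝ)..t, (t/2) * Real.sqrt (1 - (2/t * x + (-1))^2) := by
    apply intervalIntegral.integral_congr
    intro x hx
    rw [Set.uIcc_of_le (by linarith)] at hx
    obtain ⟨hx0, hxt⟩ := hx
    show Real.sqrt (x*(t-x)) = t/2 * Real.sqrt (1 - (2/t * x + (-1))^2)
    have h1 : 1 - (2/t * x + (-1))^2 = (x*(t-x)) * (2/t)^2 := by
      field_simp; ring
    rw [h1, Real.sqrt_mul (mul_nonneg hx0 (by linarith)), Real.sqrt_sq (by positivity)]
    field_simp
  rw [hcongr, intervalIntegral.integral_const_mul,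
    intervalIntegral.integral_comp_mul_add (fun u => Real.sqrt (1 - u^2))
      (by positivity : 2/t ≠ 0) (-1)]
  have e1 : 2/t * 0 + (-1) = (-1:ℝ) := by ring
  have e2 : 2/t * t + (-1) = (1:ℝ) := by field_simp; norm_num
  rw [e1, e2, integral_sqrt_one_sub_sq]
  field_simp
  ring

/-- `∑_{n=0}^{t} √(n(t-n)) ≤ (π/8)t² - (t-2)/(6t)`. -/
theorem sum_sqrt_le (t : ℕ) (ht : 0 < t) :
    ∑ n ∈ Finset.range (t + 1), Real.sqrt ((n : ℝ) * ((t : ℝ) - n)) ≤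
      Real.pi / 8 * (t : ℝ) ^ 2 - ((t : ℝ) - 2) / (6 * t) := by
  have hpi : (3:ℝ) < Real.pi := Real.pi_gt_three
  match t, ht with
  | 1, _ => simp [Finset.sum_range_succ]; linarith
  | 2, _ => simp [Finset.sum_range_succ]; norm_num; linarith
  | (m+3), _ => ?_
  set t : ℕ := m + 3 with htdef
  have ht3 : (3:ℝ) ≤ (t:ℝ) := by
    have : (3:ℕ) ≤ t := by omega
    exact_mod_cast this
  have ht0 : (0:ℝ) < t := by linarith
  have hcont : Continuous (fun x : ℝ => Real.sqrt (x*((t:ℝ)-x))) := by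
    apply Real.continuous_sqrt.comp; continuity
  set F : ℕ → ℝ := fun n => Real.sqrt ((n:ℝ) * ((t:ℝ) - n)) with hF
  have hF0 : F 0 = 0 := by simp [hF]
  have hFt : F t = 0 := by simp [hF]
  have hsum : ∑ n ∈ Finset.range (t+1), F n
      = ∑ n ∈ Finset.range t, (F n + F (n+1))/2 := by
    have e1 : ∑ n ∈ Finset.range (t+1), F n = ∑ n ∈ Finset.range t, F n := by
      rw [Finset.sum_range_succ, hFt, add_zero]
    have e2 : ∑ n ∈ Finset.range (t+1), F n = ∑ n ∈ Finset.range t, F (n+1) := by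
      rw [Finset.sum_range_succ', hF0, add_zero]
    rw [← Finset.sum_div, Finset.sum_add_distrib, ← e1, ← e2]
    ring
  have hkey : ∀ n ∈ Finset.range t,
      (F n + F (n+1))/2 + (if 1 ≤ n ∧ n + 2 ≤ t then (1:ℝ)/(6*(t:ℝ)) else 0)
        ≤ ∫ x in (n:ℝ)..((n:ℝ)+1), Real.sqrt (x*((t:ℝ)-x)) := by
    intro n hn
    have hnt : (n:ℝ) + 1 ≤ (t:ℝ) := by
      have := Finset.mem_range.mp hn
      exact_mod_cast Nat.succ_le_of_lt this
    have hFn1 : F (n+1) = Real.sqrt (((n:ℝ)+1) * ((t:ℝ) - ((n:ℝ)+1))) := by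
      simp only [hF]; congr 1; push_cast; ring
    have hFn : F n = Real.sqrt ((n:ℝ) * ((t:ℝ) - (n:ℝ))) := rfl
    split_ifs with h
    · have h1 : (1:ℝ) ≤ (n:ℝ) := by exact_mod_cast h.1
      have h2 : (n:ℝ) ≤ (t:ℝ) - 2 := by
        have : (n:ℝ) + 2 ≤ (t:ℝ) := by exact_mod_cast h.2
        linarith
      have htr := trap' (t:ℝ) (n:ℝ) (1/(t:ℝ)) (by positivity) hnt
        (Or.inr ⟨rfl, ht3, h1, h2⟩)
      rw [hFn, hFn1]
      have e : (1:ℝ)/(6*(t:ℝ)) = 1/(t:ℝ)/6 := by ring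
      rw [e]
      linarith [htr]
    · have htr := trap' (t:ℝ) (n:ℝ) 0 (by positivity) hnt (Or.inl rfl)
      rw [hFn, hFn1]
      norm_num at htr ⊢
      linarith [htr]
  have hsum2 := Finset.sum_le_sum hkey
  rw [Finset.sum_add_distrib] at hsum2
  have hadj : ∑ n ∈ Finset.range t, (∫ x in (n:ℝ)..((n:ℝ)+1), Real.sqrt (x*((t:ℝ)-x)))
      = ∫ x in (0:ℝ)..(t:ℝ), Real.sqrt (x*((t:ℝ)-x)) := by
    have := intervalIntegral.sum_integral_adjacent_intervals
      (f := fun x : ℝ => Real.sqrt (x*((t:ℝ)-x))) (μ := MeasureTheory.volume)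
      (a := fun i : ℕ => (i:ℝ)) (n := t)
      (fun k _ => hcont.intervalIntegrable _ _)
    simpa [Nat.cast_succ] using this
  have hIA := intA' (t:ℝ) ht0
  have hite : ∑ n ∈ Finset.range t, (if 1 ≤ n ∧ n + 2 ≤ t then (1:ℝ)/(6*(t:ℝ)) else 0)
      = ((t:ℝ)-2)/(6*(t:ℝ)) := by
    rw [← Finset.sum_filter]
    have hfil : (Finset.range t).filter (fun n => 1 ≤ n ∧ n + 2 ≤ t) = Finset.Ico 1 (t-1) := by
      ext x
      simp only [Finset.mem_filter, Finset.mem_range, Finset.mem_Ico]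
      omega
    rw [hfil, Finset.sum_const, Nat.card_Ico]
    have : ((t - 1 - 1 : ℕ) : ℝ) = (t:ℝ) - 2 := by
      have h2 : (2:ℕ) ≤ t := by omega
      push_cast [Nat.sub_sub]
      rw [Nat.cast_sub h2]
      push_cast
      ring
    rw [nsmul_eq_mul, this]
    ring
  rw [hadj, hIA, hite] at hsum2
  have hd : 0 < 6 * (t:ℝ) := by linarith
  calc ∑ n ∈ Finset.range (t+1), F n = ∑ n ∈ Finset.range t, (F n + F (n+1))/2 := hsum
    _ ≤ Real.pi/8 * (t:ℝ)^2 - ((t:ℝ)-2)/(6*(t:ℝ)) := by linarith [hsum2]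
    _ = Real.pi/8 * (t:ℝ)^2 - ((t:ℝ)-2)/(6*(t:ℝ)) := rfl
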